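/- Let S(u,v) be a double spider with deg(u) = deg(v) = 3 in which u is adjacent to two leaves via pendant edges e', e'', v is adjacent to one leaf via pendant edge q, and the remaining graph is a path u = w_0, w_1, ..., w_k with v = w_t for some 1 ≤ t ≤ k−2. If k is even and t > k/2, then the labeling obtained by assigning labels 1, 2, ..., k+3 in the edge order (e_2, e_4, ..., e_k, e', e'', q, e_1, e_3, ..., e_{k-1}) (where e_i = w_{i-1} w_i) is strongly antimagic; in particular φ(w_i) = k/2 + i + 4 for i ∈ {1,...,k−1}\{t}, φ(v) = k + t + 7, and φ(u) = 3k/2 + 7. -/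

import Mathlib

open Finset

open scoped Classical

noncomputable section

variable {V : Type*} [Fintype V] [DecidableEq V]

/-- The finset of edges of a simple graph on a finite vertex type. -/
def edges (G : SimpleGraph V) : Finset (Sym2 V) :=
  Finset.univ.filter (fun e => e ∈ G.edgeSet)

/-- The vertex sum `φ_f(v)`: the sum of the labels of the edges incident to `v`. -/
def phi (G : SimpleGraph V) (f : Sym2 V → ℕ) (v : V) : ℕ :=
  ∑ e ∈ (edges G).filter (fun e => v ∈ e), f e

/-- The degree of a vertex: the number of edges incident to it. -/
def deg (G : SimpleGraph V) (v : V) : ℕ :=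
  ((edges G).filter (fun e => v ∈ e)).card

/-- `f` is a strongly antimagic labeling of `G`: a bijection from the edge set onto
`{1, …, m}` with pairwise distinct vertex sums, such that larger degree forces a
larger vertex sum. -/
def IsStronglyAntimagicLabeling (G : SimpleGraph V) (f : Sym2 V → ℕ) : Prop :=
  Set.BijOn f (edges G : Set (Sym2 V)) (Set.Icc 1 (edges G).card) ∧
  (∀ u v : V, u ≠ v → phi G f u ≠ phi G f v) ∧
  (∀ u v : V, deg G v < deg G u → phi G f v < phi G f u)

/-- A graph is strongly antimagic if it admits a strongly antimagic labeling. -/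
def IsStronglyAntimagic (G : SimpleGraph V) : Prop :=
  ∃ f : Sym2 V → ℕ, IsStronglyAntimagicLabeling G f

/-- The double spider of STATEMENT 15: a path `w_0, …, w_k` (vertices `Sum.inl i`),
two pendant edges `e' = w_0 (inr 0)`, `e'' = w_0 (inr 1)` at `u = w_0`, and one pendant
edge `q = w_t (inr 2)` at `v = w_t`. -/
def dblSpiderA (k t : ℕ) : SimpleGraph (Fin (k + 1) ⊕ Fin 3) :=
  SimpleGraph.fromEdgeSet (
    {e | ∃ i j : Fin (k + 1), (j : ℕ) = (i : ℕ) + 1 ∧ e = s(Sum.inl i, Sum.inl j)}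
    ∪ {e | ∃ i : Fin (k + 1), (i : ℕ) = 0 ∧
        (e = s(Sum.inl i, Sum.inr 0) ∨ e = s(Sum.inl i, Sum.inr 1))}
    ∪ {e | ∃ i : Fin (k + 1), (i : ℕ) = t ∧ e = s(Sum.inl i, Sum.inr 2)})

/-- The smaller 0-indexed path endpoint of an edge (junk value `0` on `inr`). -/
def minIdxA {k : ℕ} : Sym2 (Fin (k + 1) ⊕ Fin 3) → ℕ :=
  Sym2.lift ⟨fun a b =>
      min (Sum.elim (fun i : Fin (k + 1) => (i : ℕ)) (fun _ => 0) a)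
        (Sum.elim (fun i : Fin (k + 1) => (i : ℕ)) (fun _ => 0) b),
    fun a b => min_comm _ _⟩

/-- The labeling of STATEMENT 15: labels `1, …, k+3` in the order
`(e_2, e_4, …, e_k, e', e'', q, e_1, e_3, …, e_{k-1})` (for `k` even). -/
def labA (k : ℕ) : Sym2 (Fin (k + 1) ⊕ Fin 3) → ℕ := fun e =>
  if (Sum.inr 0 : Fin (k + 1) ⊕ Fin 3) ∈ e then k / 2 + 1
  else if (Sum.inr 1 : Fin (k + 1) ⊕ Fin 3) ∈ e then k / 2 + 2
  else if (Sum.inr 2 : Fin (k + 1) ⊕ Fin 3) ∈ e then k / 2 + 3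
  else if (minIdxA e + 1) % 2 = 0 then (minIdxA e + 1) / 2
  else k / 2 + 4 + (minIdxA e + 1 - 1) / 2

namespace Stmt15

def pe {k : ℕ} (i : Fin k) : Sym2 (Fin (k + 1) ⊕ Fin 3) :=
  s(Sum.inl i.castSucc, Sum.inl i.succ)

lemma pe_inj {k : ℕ} : Function.Injective (pe (k := k)) := by
  intro i j h
  simp only [pe, Sym2.eq_iff, Sum.inl.injEq] at h
  apply Fin.ext
  rcases h with ⟨h1, h2⟩ | ⟨h1, h2⟩ <;>
    [skip; skip] <;>
  · have a1 := congrArg Fin.val h1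
    have a2 := congrArg Fin.val h2
    simp at a1 a2
    omega

def p1 (k : ℕ) : Sym2 (Fin (k + 1) ⊕ Fin 3) :=
  s(Sum.inl ⟨0, Nat.succ_pos k⟩, Sum.inr 0)

def p2 (k : ℕ) : Sym2 (Fin (k + 1) ⊕ Fin 3) :=
  s(Sum.inl ⟨0, Nat.succ_pos k⟩, Sum.inr 1)

def p3 (k t : ℕ) (h : t < k + 1) : Sym2 (Fin (k + 1) ⊕ Fin 3) :=
  s(Sum.inl ⟨t, h⟩, Sum.inr 2)

def EA (k t : ℕ) (h : t < k + 1) : Finset (Sym2 (Fin (k + 1) ⊕ Fin 3)) :=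
  (Finset.univ.image (pe (k := k))) ∪ {p1 k, p2 k, p3 k t h}

lemma mem_EA {k t : ℕ} {h : t < k + 1} {e : Sym2 (Fin (k + 1) ⊕ Fin 3)} :
    e ∈ EA k t h ↔ (∃ i : Fin k, e = pe i) ∨ e = p1 k ∨ e = p2 k ∨ e = p3 k t h := by
  simp only [EA, Finset.mem_union, Finset.mem_image, Finset.mem_univ, true_and,
    Finset.mem_insert, Finset.mem_singleton, eq_comm (b := e)]

lemma edges_eq {k t : ℕ} (h : t < k + 1) : edges (dblSpiderA k t) = EA k t h := by
  ext e
  simp only [edges, dblSpiderA, Finset.mem_filter, Finset.mem_univ, true_and,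
    SimpleGraph.edgeSet_fromEdgeSet, Set.mem_diff, Set.mem_union, Set.mem_setOf_eq,
    Set.mem_setOf_eq]
  rw [mem_EA]
  constructor
  · rintro ⟨(⟨i, j, hij, rfl⟩ | ⟨i, hi0, (rfl | rfl)⟩) | ⟨i, hit, rfl⟩, hd⟩
    · left
      have hik : (i : ℕ) < k := by have := j.isLt; omega
      refine ⟨⟨(i : ℕ), hik⟩, ?_⟩
      have h1 : i = (⟨(i : ℕ), hik⟩ : Fin k).castSucc := by apply Fin.ext; simp
      have h2 : j = (⟨(i : ℕ), hik⟩ : Fin k).succ := by apply Fin.ext; simp [hij]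
      rw [pe, ← h1, ← h2]
    · right; left
      have : i = ⟨0, Nat.succ_pos k⟩ := Fin.ext hi0
      rw [this]; rfl
    · right; right; left
      have : i = ⟨0, Nat.succ_pos k⟩ := Fin.ext hi0
      rw [this]; rfl
    · right; right; right
      have : i = ⟨t, h⟩ := Fin.ext hit
      rw [this]; rfl
  · rintro (⟨i, rfl⟩ | rfl | rfl | rfl)
    · refine ⟨Or.inl (Or.inl ⟨i.castSucc, i.succ, by simp, rfl⟩), ?_⟩
      simp only [pe, Sym2.mk_isDiag_iff, Set.mem_setOf_eq]
      intro hcon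
      have := congrArg Fin.val (Sum.inl.inj hcon)
      simp at this
    · exact ⟨Or.inl (Or.inr ⟨⟨0, Nat.succ_pos k⟩, rfl, Or.inl rfl⟩), by simp [p1]⟩
    · exact ⟨Or.inl (Or.inr ⟨⟨0, Nat.succ_pos k⟩, rfl, Or.inr rfl⟩), by simp [p2]⟩
    · exact ⟨Or.inr ⟨⟨t, h⟩, rfl, rfl⟩, by simp [p3]⟩

end Stmt15

namespace Stmt15

lemma pe_ne_p1 {k : ℕ} (i : Fin k) : pe i ≠ p1 k := by
  simp [pe, p1, Sym2.eq_iff]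

lemma pe_ne_p2 {k : ℕ} (i : Fin k) : pe i ≠ p2 k := by
  simp [pe, p2, Sym2.eq_iff]

lemma pe_ne_p3 {k t : ℕ} (h : t < k + 1) (i : Fin k) : pe i ≠ p3 k t h := by
  simp [pe, p3, Sym2.eq_iff]

lemma card_EA {k t : ℕ} (h : t < k + 1) : (EA k t h).card = k + 3 := by
  rw [EA, Finset.card_union_of_disjoint, Finset.card_image_of_injective _ pe_inj,
    Finset.card_univ, Fintype.card_fin]
  · have c1 : p1 k ≠ p2 k := by simp [p1, p2, Sym2.eq_iff]
    have c2 : p1 k ≠ p3 k t h := by simp [p1, p3, Sym2.eq_iff]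
    have c3 : p2 k ≠ p3 k t h := by simp [p2, p3, Sym2.eq_iff]
    rw [Finset.card_insert_of_notMem (by simp [c1, c2]),
      Finset.card_insert_of_notMem (by simp [c3]), Finset.card_singleton]
  · rw [Finset.disjoint_left]
    rintro e he hmem
    simp only [Finset.mem_image, Finset.mem_univ, true_and] at he
    obtain ⟨i, rfl⟩ := he
    simp only [Finset.mem_insert, Finset.mem_singleton] at hmem
    rcases hmem with h' | h' | h'
    exacts [pe_ne_p1 i h', pe_ne_p2 i h', pe_ne_p3 h i h']

lemma not_inr_mem_pe {k : ℕ} (c : Fin 3) (i : Fin k) :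
    (Sum.inr c : Fin (k + 1) ⊕ Fin 3) ∉ pe i := by
  simp [pe, Sym2.mem_iff]

lemma minIdx_pe {k : ℕ} (i : Fin k) : minIdxA (pe i) = (i : ℕ) := by
  simp only [minIdxA, pe, Sym2.lift_mk]
  simp [Nat.min_def]

lemma labA_pe {k : ℕ} (i : Fin k) : labA k (pe i) =
    if ((i : ℕ) + 1) % 2 = 0 then ((i : ℕ) + 1) / 2 else k / 2 + 4 + (i : ℕ) / 2 := by
  simp [labA, not_inr_mem_pe, minIdx_pe]

lemma labA_p1 {k : ℕ} : labA k (p1 k) = k / 2 + 1 := by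
  simp [labA, p1, Sym2.mem_iff]

lemma labA_p2 {k : ℕ} : labA k (p2 k) = k / 2 + 2 := by
  have h0 : (Sum.inr 0 : Fin (k + 1) ⊕ Fin 3) ∉ p2 k := by
    simp [p2, Sym2.mem_iff]
  simp [labA, p2, Sym2.mem_iff, h0]

lemma labA_p3 {k t : ℕ} (h : t < k + 1) : labA k (p3 k t h) = k / 2 + 3 := by
  have h0 : (Sum.inr 0 : Fin (k + 1) ⊕ Fin 3) ∉ p3 k t h := by
    simp [p3, Sym2.mem_iff]
  have h1 : (Sum.inr 1 : Fin (k + 1) ⊕ Fin 3) ∉ p3 k t h := by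
    simp [p3, Sym2.mem_iff]
  simp [labA, p3, Sym2.mem_iff, h0, h1]

end Stmt15

namespace Stmt15

lemma inl_mem_pe {k : ℕ} {j : Fin (k + 1)} {i : Fin k} :
    (Sum.inl j : Fin (k + 1) ⊕ Fin 3) ∈ pe i ↔ (j : ℕ) = (i : ℕ) ∨ (j : ℕ) = (i : ℕ) + 1 := by
  simp [pe, Sym2.mem_iff, Fin.ext_iff]

lemma inl_mem_p1 {k : ℕ} {j : Fin (k + 1)} :
    (Sum.inl j : Fin (k + 1) ⊕ Fin 3) ∈ p1 k ↔ (j : ℕ) = 0 := by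
  rw [p1, Sym2.mem_iff]; simp only [Sum.inl.injEq, reduceCtorEq, or_false]; exact Fin.ext_iff

lemma inl_mem_p2 {k : ℕ} {j : Fin (k + 1)} :
    (Sum.inl j : Fin (k + 1) ⊕ Fin 3) ∈ p2 k ↔ (j : ℕ) = 0 := by
  rw [p2, Sym2.mem_iff]; simp only [Sum.inl.injEq, reduceCtorEq, or_false]; exact Fin.ext_iff

lemma inl_mem_p3 {k t : ℕ} (h : t < k + 1) {j : Fin (k + 1)} :
    (Sum.inl j : Fin (k + 1) ⊕ Fin 3) ∈ p3 k t h ↔ (j : ℕ) = t := by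
  simp [p3, Sym2.mem_iff, Fin.ext_iff]

lemma filt_zero {k t : ℕ} (h : t < k + 1) (hk : 0 < k) (ht1 : 1 ≤ t) (i : Fin (k + 1))
    (hi : (i : ℕ) = 0) :
    (EA k t h).filter (fun e => (Sum.inl i : Fin (k + 1) ⊕ Fin 3) ∈ e) =
      {pe ⟨0, hk⟩, p1 k, p2 k} := by
  ext e
  simp only [Finset.mem_filter, mem_EA, Finset.mem_insert, Finset.mem_singleton]
  constructor
  · rintro ⟨⟨j, rfl⟩ | rfl | rfl | rfl, hv⟩
    · rw [inl_mem_pe] at hv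
      left; congr 1; apply Fin.ext; simp; omega
    · right; left; rfl
    · right; right; rfl
    · rw [inl_mem_p3] at hv; omega
  · rintro (rfl | rfl | rfl)
    · exact ⟨Or.inl ⟨_, rfl⟩, by rw [inl_mem_pe]; left; exact hi⟩
    · exact ⟨Or.inr (Or.inl rfl), by rw [inl_mem_p1]; omega⟩
    · exact ⟨Or.inr (Or.inr (Or.inl rfl)), by rw [inl_mem_p2]; omega⟩

lemma filt_mid {k t : ℕ} (h : t < k + 1) (i : Fin (k + 1)) (hi1 : 1 ≤ (i : ℕ))
    (hik : (i : ℕ) < k) (hit : (i : ℕ) ≠ t) :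
    (EA k t h).filter (fun e => (Sum.inl i : Fin (k + 1) ⊕ Fin 3) ∈ e) =
      {pe ⟨(i : ℕ) - 1, by omega⟩, pe ⟨(i : ℕ), hik⟩} := by
  ext e
  simp only [Finset.mem_filter, mem_EA, Finset.mem_insert, Finset.mem_singleton]
  constructor
  · rintro ⟨⟨j, rfl⟩ | rfl | rfl | rfl, hv⟩
    · rw [inl_mem_pe] at hv
      rcases hv with hv | hv
      · right; congr 1; apply Fin.ext; simp; omega
      · left; congr 1; apply Fin.ext; simp; omega
    · rw [inl_mem_p1] at hv; omega
    · rw [inl_mem_p2] at hv; omega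
    · rw [inl_mem_p3] at hv; omega
  · rintro (rfl | rfl)
    · exact ⟨Or.inl ⟨_, rfl⟩, by rw [inl_mem_pe]; simp; omega⟩
    · exact ⟨Or.inl ⟨_, rfl⟩, by rw [inl_mem_pe]; simp⟩

lemma filt_t {k t : ℕ} (h : t < k + 1) (ht1 : 1 ≤ t) (htk : t < k) (i : Fin (k + 1))
    (hi : (i : ℕ) = t) :
    (EA k t h).filter (fun e => (Sum.inl i : Fin (k + 1) ⊕ Fin 3) ∈ e) =
      {pe ⟨t - 1, by omega⟩, pe ⟨t, htk⟩, p3 k t h} := by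
  ext e
  simp only [Finset.mem_filter, mem_EA, Finset.mem_insert, Finset.mem_singleton]
  constructor
  · rintro ⟨⟨j, rfl⟩ | rfl | rfl | rfl, hv⟩
    · rw [inl_mem_pe] at hv
      rcases hv with hv | hv
      · right; left; congr 1; apply Fin.ext; simp; omega
      · left; congr 1; apply Fin.ext; simp; omega
    · rw [inl_mem_p1] at hv; omega
    · rw [inl_mem_p2] at hv; omega
    · right; right; rfl
  · rintro (rfl | rfl | rfl)
    · exact ⟨Or.inl ⟨_, rfl⟩, by rw [inl_mem_pe]; simp; omega⟩
    · exact ⟨Or.inl ⟨_, rfl⟩, by rw [inl_mem_pe]; simp; omega⟩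
    · exact ⟨Or.inr (Or.inr (Or.inr rfl)), by rw [inl_mem_p3]; omega⟩

lemma filt_last {k t : ℕ} (h : t < k + 1) (hk : 0 < k) (htk : t < k) (i : Fin (k + 1))
    (hi : (i : ℕ) = k) :
    (EA k t h).filter (fun e => (Sum.inl i : Fin (k + 1) ⊕ Fin 3) ∈ e) =
      {pe ⟨k - 1, by omega⟩} := by
  ext e
  simp only [Finset.mem_filter, mem_EA, Finset.mem_singleton]
  constructor
  · rintro ⟨⟨j, rfl⟩ | rfl | rfl | rfl, hv⟩
    · rw [inl_mem_pe] at hv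
      have := j.isLt
      congr 1; apply Fin.ext; simp; omega
    · rw [inl_mem_p1] at hv; omega
    · rw [inl_mem_p2] at hv; omega
    · rw [inl_mem_p3] at hv; omega
  · rintro rfl
    exact ⟨Or.inl ⟨_, rfl⟩, by rw [inl_mem_pe]; simp; omega⟩

lemma filt_r0 {k t : ℕ} (h : t < k + 1) :
    (EA k t h).filter (fun e => (Sum.inr 0 : Fin (k + 1) ⊕ Fin 3) ∈ e) = {p1 k} := by
  ext e
  simp only [Finset.mem_filter, mem_EA, Finset.mem_singleton]
  constructor
  · rintro ⟨⟨j, rfl⟩ | rfl | rfl | rfl, hv⟩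
    · exact absurd hv (not_inr_mem_pe _ _)
    · rfl
    · revert hv; simp [p2, Sym2.mem_iff]
    · revert hv; simp [p3, Sym2.mem_iff]
  · rintro rfl
    exact ⟨Or.inr (Or.inl rfl), by simp [p1, Sym2.mem_iff]⟩

lemma filt_r1 {k t : ℕ} (h : t < k + 1) :
    (EA k t h).filter (fun e => (Sum.inr 1 : Fin (k + 1) ⊕ Fin 3) ∈ e) = {p2 k} := by
  ext e
  simp only [Finset.mem_filter, mem_EA, Finset.mem_singleton]
  constructor
  · rintro ⟨⟨j, rfl⟩ | rfl | rfl | rfl, hv⟩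
    · exact absurd hv (not_inr_mem_pe _ _)
    · revert hv; simp [p1, Sym2.mem_iff]
    · rfl
    · revert hv; simp [p3, Sym2.mem_iff]
  · rintro rfl
    exact ⟨Or.inr (Or.inr (Or.inl rfl)), by simp [p2, Sym2.mem_iff]⟩

lemma filt_r2 {k t : ℕ} (h : t < k + 1) :
    (EA k t h).filter (fun e => (Sum.inr 2 : Fin (k + 1) ⊕ Fin 3) ∈ e) = {p3 k t h} := by
  ext e
  simp only [Finset.mem_filter, mem_EA, Finset.mem_singleton]
  constructor
  · rintro ⟨⟨j, rfl⟩ | rfl | rfl | rfl, hv⟩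
    · exact absurd hv (not_inr_mem_pe _ _)
    · revert hv; simp [p1, Sym2.mem_iff]
    · revert hv; simp [p2, Sym2.mem_iff]
    · rfl
  · rintro rfl
    exact ⟨Or.inr (Or.inr (Or.inr rfl)), by simp [p3, Sym2.mem_iff]⟩

end Stmt15

namespace Stmt15

lemma p1_ne_p2 {k : ℕ} : p1 k ≠ p2 k := by simp [p1, p2, Sym2.eq_iff]

lemma pe_mk_ne {k : ℕ} {a b : ℕ} {ha : a < k} {hb : b < k} (hab : a ≠ b) :
    pe ⟨a, ha⟩ ≠ pe ⟨b, hb⟩ := by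
  intro hcon
  exact hab (congrArg Fin.val (pe_inj hcon))

lemma phi_inl {k t : ℕ} (hke : k % 2 = 0) (ht1 : 1 ≤ t) (ht2 : t + 2 ≤ k) (htk : k / 2 < t)
    (i : Fin (k + 1)) :
    phi (dblSpiderA k t) (labA k) (Sum.inl i) =
      if (i : ℕ) = 0 then k + k / 2 + 7
      else if (i : ℕ) = t then k + t + 7
      else if (i : ℕ) = k then k / 2
      else k / 2 + 4 + (i : ℕ) := by
  have h : t < k + 1 := by omega
  have h6 : 6 ≤ k := by omega
  unfold phi
  rw [edges_eq h]
  rcases eq_or_ne (i : ℕ) 0 with hi | hi0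
  · rw [if_pos hi, filt_zero h (by omega) ht1 i hi,
      Finset.sum_insert (by simp [Finset.mem_insert, pe_ne_p1, pe_ne_p2]),
      Finset.sum_pair p1_ne_p2, labA_pe, labA_p1, labA_p2]
    simp only [Fin.val_mk]
    split_ifs <;> first | contradiction | omega
  rcases eq_or_ne (i : ℕ) t with hi | hit
  · rw [if_neg hi0, if_pos hi, filt_t h ht1 (by omega) i hi,
      Finset.sum_insert (by
        simp only [Finset.mem_insert, Finset.mem_singleton]
        push_neg
        exact ⟨pe_mk_ne (by omega), pe_ne_p3 h _⟩),
      Finset.sum_pair (pe_ne_p3 h _), labA_pe, labA_pe, labA_p3]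
    simp only [Fin.val_mk]
    split_ifs <;> first | contradiction | omega
  rcases eq_or_ne (i : ℕ) k with hi | hik
  · rw [if_neg hi0, if_neg hit, if_pos hi, filt_last h (by omega) (by omega) i hi,
      Finset.sum_singleton, labA_pe]
    simp only [Fin.val_mk]
    split_ifs <;> first | contradiction | omega
  · have hik' : (i : ℕ) < k := by have := i.isLt; omega
    rw [if_neg hi0, if_neg hit, if_neg hik,
      filt_mid h i (by omega) hik' hit,
      Finset.sum_pair (pe_mk_ne (by omega)), labA_pe, labA_pe]
    simp only [Fin.val_mk]
    split_ifs <;> first | contradiction | omega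

lemma deg_inl {k t : ℕ} (hke : k % 2 = 0) (ht1 : 1 ≤ t) (ht2 : t + 2 ≤ k) (htk : k / 2 < t)
    (i : Fin (k + 1)) :
    deg (dblSpiderA k t) (Sum.inl i) =
      if (i : ℕ) = 0 ∨ (i : ℕ) = t then 3
      else if (i : ℕ) = k then 1
      else 2 := by
  have h : t < k + 1 := by omega
  have h6 : 6 ≤ k := by omega
  unfold deg
  rw [edges_eq h]
  rcases eq_or_ne (i : ℕ) 0 with hi | hi0
  · rw [if_pos (Or.inl hi), filt_zero h (by omega) ht1 i hi,
      Finset.card_insert_of_notMem (by simp [Finset.mem_insert, pe_ne_p1, pe_ne_p2]),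
      Finset.card_pair p1_ne_p2]
  rcases eq_or_ne (i : ℕ) t with hi | hit
  · rw [if_pos (Or.inr hi), filt_t h ht1 (by omega) i hi,
      Finset.card_insert_of_notMem (by
        simp only [Finset.mem_insert, Finset.mem_singleton]
        push_neg
        exact ⟨pe_mk_ne (by omega), pe_ne_p3 h _⟩),
      Finset.card_pair (pe_ne_p3 h _)]
  rcases eq_or_ne (i : ℕ) k with hi | hik
  · rw [if_neg (by omega), if_pos hi, filt_last h (by omega) (by omega) i hi,
      Finset.card_singleton]
  · have hik' : (i : ℕ) < k := by have := i.isLt; omega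
    rw [if_neg (by omega), if_neg hik, filt_mid h i (by omega) hik' hit,
      Finset.card_pair (pe_mk_ne (by omega))]

lemma phi_inr {k t : ℕ} (h : t < k + 1) (c : Fin 3) :
    phi (dblSpiderA k t) (labA k) (Sum.inr c) = k / 2 + 1 + (c : ℕ) := by
  unfold phi
  rw [edges_eq h]
  have hc : (c : ℕ) = 0 ∨ (c : ℕ) = 1 ∨ (c : ℕ) = 2 := by omega
  rcases hc with hc | hc | hc
  · have hc' : c = 0 := Fin.ext (by simpa using hc)
    subst hc'
    rw [filt_r0 h, Finset.sum_singleton, labA_p1, hc]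
  · have hc' : c = 1 := Fin.ext (by simpa using hc)
    subst hc'
    rw [filt_r1 h, Finset.sum_singleton, labA_p2, hc]
  · have hc' : c = 2 := Fin.ext (by simpa using hc)
    subst hc'
    rw [filt_r2 h, Finset.sum_singleton, labA_p3, hc]

lemma deg_inr {k t : ℕ} (h : t < k + 1) (c : Fin 3) :
    deg (dblSpiderA k t) (Sum.inr c) = 1 := by
  unfold deg
  rw [edges_eq h]
  have hc : (c : ℕ) = 0 ∨ (c : ℕ) = 1 ∨ (c : ℕ) = 2 := by omega
  rcases hc with hc | hc | hc
  · have hc' : c = 0 := Fin.ext (by simpa using hc)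
    subst hc'
    rw [filt_r0 h, Finset.card_singleton]
  · have hc' : c = 1 := Fin.ext (by simpa using hc)
    subst hc'
    rw [filt_r1 h, Finset.card_singleton]
  · have hc' : c = 2 := Fin.ext (by simpa using hc)
    subst hc'
    rw [filt_r2 h, Finset.card_singleton]

end Stmt15

namespace Stmt15

lemma image_labA {k t : ℕ} (hke : k % 2 = 0) (h6 : 6 ≤ k) (h : t < k + 1) :
    (EA k t h).image (labA k) = Finset.Icc 1 (k + 3) := by
  apply Finset.Subset.antisymm
  · intro m hm
    simp only [Finset.mem_image] at hm
    obtain ⟨e, he, rfl⟩ := hm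
    rw [mem_EA] at he
    simp only [Finset.mem_Icc]
    rcases he with ⟨i, rfl⟩ | rfl | rfl | rfl
    · rw [labA_pe]
      have := i.isLt
      split_ifs <;> omega
    · rw [labA_p1]; omega
    · rw [labA_p2]; omega
    · rw [labA_p3]; omega
  · intro m hm
    simp only [Finset.mem_Icc] at hm
    simp only [Finset.mem_image]
    rcases le_or_gt m (k / 2) with hm2 | hm2
    · refine ⟨pe ⟨2 * m - 1, by omega⟩, ?_, ?_⟩
      · rw [mem_EA]; exact Or.inl ⟨_, rfl⟩
      · rw [labA_pe]
        simp only [Fin.val_mk]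
        split_ifs <;> first | contradiction | omega
    rcases eq_or_ne m (k / 2 + 1) with rfl | hm3
    · exact ⟨p1 k, by rw [mem_EA]; tauto, labA_p1⟩
    rcases eq_or_ne m (k / 2 + 2) with rfl | hm4
    · exact ⟨p2 k, by rw [mem_EA]; tauto, labA_p2⟩
    rcases eq_or_ne m (k / 2 + 3) with rfl | hm5
    · exact ⟨p3 k t h, by rw [mem_EA]; tauto, labA_p3 h⟩
    · refine ⟨pe ⟨2 * (m - k / 2 - 4), by omega⟩, ?_, ?_⟩
      · rw [mem_EA]; exact Or.inl ⟨_, rfl⟩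
      · rw [labA_pe]
        simp only [Fin.val_mk]
        split_ifs <;> first | contradiction | omega

lemma bijOn_labA {k t : ℕ} (hke : k % 2 = 0) (h6 : 6 ≤ k) (h : t < k + 1) :
    Set.BijOn (labA k) (EA k t h : Set (Sym2 (Fin (k + 1) ⊕ Fin 3)))
      (Set.Icc 1 (k + 3)) := by
  have himg : labA k '' (EA k t h : Set (Sym2 (Fin (k + 1) ⊕ Fin 3))) = Set.Icc 1 (k + 3) := by
    rw [← Finset.coe_image, image_labA hke h6 h, Finset.coe_Icc]
  have hinj : Set.InjOn (labA k) (EA k t h : Set (Sym2 (Fin (k + 1) ⊕ Fin 3))) := by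
    apply Finset.injOn_of_card_image_eq
    rw [image_labA hke h6 h, card_EA h, Nat.card_Icc]
    omega
  have := hinj.bijOn_image
  rwa [himg] at this

end Stmt15

/-- for `k` even and `k/2 < t ≤ k - 2`, the explicit labeling of the
double spider is strongly antimagic, with the stated vertex sums
`φ(w_i) = k/2 + i + 4` (for `1 ≤ i ≤ k-1`, `i ≠ t`), `φ(v) = k + t + 7`, and
`φ(u) = 3k/2 + 7`. -/
theorem stmt_15 (k t : ℕ) (hke : k % 2 = 0) (ht1 : 1 ≤ t) (ht2 : t ≤ k - 2)
    (htk : k / 2 < t) :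
    IsStronglyAntimagicLabeling (dblSpiderA k t) (labA k) ∧
    (∀ i : Fin (k + 1), 1 ≤ (i : ℕ) → (i : ℕ) ≤ k - 1 → (i : ℕ) ≠ t →
      phi (dblSpiderA k t) (labA k) (Sum.inl i) = k / 2 + (i : ℕ) + 4) ∧
    (∀ i : Fin (k + 1), (i : ℕ) = t →
      phi (dblSpiderA k t) (labA k) (Sum.inl i) = k + t + 7) ∧
    (∀ i : Fin (k + 1), (i : ℕ) = 0 →
      phi (dblSpiderA k t) (labA k) (Sum.inl i) = k + k / 2 + 7) := by
  have h6 : 6 ≤ k := by omega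
  have h : t < k + 1 := by omega
  have ht2' : t + 2 ≤ k := by omega
  have PL := Stmt15.phi_inl hke ht1 ht2' htk
  have PR := Stmt15.phi_inr (k := k) (t := t) h
  have DL := Stmt15.deg_inl hke ht1 ht2' htk
  have DR := Stmt15.deg_inr (k := k) (t := t) h
  refine ⟨⟨?_, ?_, ?_⟩, ?_, ?_, ?_⟩
  · rw [Stmt15.edges_eq h, Stmt15.card_EA h]
    exact Stmt15.bijOn_labA hke h6 h
  · rintro (i1 | c1) (i2 | c2) hne
    · have hne' : (i1 : ℕ) ≠ (i2 : ℕ) := fun hc => hne (congrArg Sum.inl (Fin.ext hc))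
      rw [PL, PL]
      have b1 := i1.isLt
      have b2 := i2.isLt
      split_ifs <;> omega
    · rw [PL, PR]
      have b1 := i1.isLt
      have b2 := c2.isLt
      split_ifs <;> omega
    · rw [PR, PL]
      have b1 := c1.isLt
      have b2 := i2.isLt
      split_ifs <;> omega
    · have hne' : (c1 : ℕ) ≠ (c2 : ℕ) := fun hc => hne (congrArg Sum.inr (Fin.ext hc))
      rw [PR, PR]
      omega
  · rintro (i1 | c1) (i2 | c2) hdeg
    · rw [DL, DL] at hdeg
      rw [PL, PL]
      have b1 := i1.isLt
      have b2 := i2.isLt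
      split_ifs at hdeg ⊢ <;> omega
    · rw [DL, DR] at hdeg
      rw [PL, PR]
      have b1 := i1.isLt
      have b2 := c2.isLt
      split_ifs at hdeg ⊢ <;> omega
    · rw [DR, DL] at hdeg
      rw [PR, PL]
      have b1 := c1.isLt
      have b2 := i2.isLt
      split_ifs at hdeg ⊢ <;> omega
    · rw [DR, DR] at hdeg
      omega
  · intro i hi1 hi2 hit
    rw [PL]
    have b1 := i.isLt
    split_ifs <;> omega
  · intro i hi
    rw [PL]
    split_ifs <;> omega
  · intro i hi
    rw [PL]
    split_ifs <;> omega
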